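/- For every integer κ ≥ 2 there exist a symmetric real κ × κ matrix Q all of whose off-diagonal entries are positive and each of whose rows sums to 0, a real orthogonal κ × κ matrix U all of whose entries are non-zero, and a real diagonal κ × κ matrix D with pairwise distinct diagonal entries, such that Q = U D Uᵀ. In particular, such a Q has κ distinct eigenvalues and its eigenvectors can be chosen to have all non-zero entries. -/

import Mathlib

open Matrix Finset

set_option maxHeartbeats 1000000 in
/-- For every `κ ≥ 2` there is a symmetric rate matrix `Q` with positive
off-diagonal entries and rows summing to 0 admitting a diagonalization
`Q = U D Uᵀ` with `U` orthogonal with all entries non-zero and `D` diagonal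
with pairwise distinct diagonal entries. -/
theorem exists_nice_rate_matrix (κ : ℕ) (hκ : 2 ≤ κ) :
    ∃ (Q U : Matrix (Fin κ) (Fin κ) ℝ) (d : Fin κ → ℝ),
      Q.IsSymm ∧
      (∀ i j, i ≠ j → 0 < Q i j) ∧
      (∀ i, ∑ j, Q i j = 0) ∧
      Uᵀ * U = 1 ∧
      (∀ i j, U i j ≠ 0) ∧
      Function.Injective d ∧
      Q = U * Matrix.diagonal d * Uᵀ := by
  haveI : NeZero κ := ⟨by omega⟩
  set s : ℝ := Real.sqrt κ with hs_def
  have hκr : (2:ℝ) ≤ (κ:ℝ) := by exact_mod_cast hκ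
  have hs2 : s ^ 2 = κ := Real.sq_sqrt (by positivity)
  have hs0 : 0 < s := Real.sqrt_pos.mpr (by positivity)
  have hs1 : 1 < s := by nlinarith
  have hcs : 0 < (κ:ℝ) - s := by nlinarith
  -- κ - s ≠ 1
  have hne1 : (κ:ℝ) - s ≠ 1 := by
    intro h
    have hk2 : (κ:ℝ) ^ 2 - 3 * κ + 1 = 0 := by nlinarith
    rcases (show κ = 2 ∨ 3 ≤ κ by omega) with rfl | h3
    · norm_num at hk2
    · have h3' : (3:ℝ) ≤ (κ:ℝ) := by exact_mod_cast h3
      nlinarith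
  set c : ℝ := ((κ:ℝ) - s)⁻¹ with hc_def
  have hc0 : 0 < c := by positivity
  set v : Fin κ → ℝ := fun i => if i = 0 then s - 1 else -1 with hv_def
  set H : Matrix (Fin κ) (Fin κ) ℝ :=
    fun i j => (if i = j then 1 else 0) - c * v i * v j with hH_def
  have hsymm : ∀ a b, H a b = H b a := by
    intro a b
    rcases eq_or_ne a b with rfl | hab
    · rfl
    · simp only [hH_def, if_neg hab, if_neg hab.symm]; ring
  -- sum of squares of v
  have hvsum : ∑ k, v k ^ 2 = 2 * κ - 2 * s := by
    have h1 : ∀ k : Fin κ, v k ^ 2 = 1 + (if k = 0 then (s-1)^2 - 1 else 0) := by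
      intro k; simp only [hv_def]; split <;> ring
    rw [Finset.sum_congr rfl fun k _ => h1 k, Finset.sum_add_distrib,
      Finset.sum_ite_eq' Finset.univ (0 : Fin κ) (fun _ => (s-1)^2 - 1)]
    simp [Finset.card_univ]
    nlinarith
  -- orthogonality key
  have key : ∀ i j, ∑ k, H k i * H k j = if i = j then (1:ℝ) else 0 := by
    intro i j
    have expand : ∀ k : Fin κ, H k i * H k j =
        ((if k = i then (1:ℝ) else 0) * (if k = j then (1:ℝ) else 0)
        - (if k = i then (1:ℝ) else 0) * (c * v k * v j)
        - (if k = j then (1:ℝ) else 0) * (c * v k * v i))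
        + (c^2 * v i * v j) * (v k)^2 := by
      intro k; simp only [hH_def]; ring
    rw [Finset.sum_congr rfl fun k _ => expand k, Finset.sum_add_distrib,
      Finset.sum_sub_distrib, Finset.sum_sub_distrib, ← Finset.mul_sum, hvsum]
    have e1 : ∑ k : Fin κ, (if k = i then (1:ℝ) else 0) * (if k = j then (1:ℝ) else 0)
        = if i = j then (1:ℝ) else 0 := by
      rw [Finset.sum_congr rfl (g := fun k => if k = i then (if i = j then (1:ℝ) else 0) else 0)
        (fun k _ => by by_cases h : k = i <;> simp [h])]
      simp [Finset.sum_ite_eq']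
    have e2 : ∑ k : Fin κ, (if k = i then (1:ℝ) else 0) * (c * v k * v j)
        = c * v i * v j := by
      rw [Finset.sum_congr rfl (g := fun k => if k = i then c * v i * v j else 0)
        (fun k _ => by by_cases h : k = i <;> simp [h])]
      simp [Finset.sum_ite_eq']
    have e3 : ∑ k : Fin κ, (if k = j then (1:ℝ) else 0) * (c * v k * v i)
        = c * v j * v i := by
      rw [Finset.sum_congr rfl (g := fun k => if k = j then c * v j * v i else 0)
        (fun k _ => by by_cases h : k = j <;> simp [h])]
      simp [Finset.sum_ite_eq']
    rw [e1, e2, e3]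
    have hcc : c ^ 2 * (2 * κ - 2 * s) = 2 * c := by
      rw [hc_def]; field_simp
    linear_combination (v i * v j) * hcc
  -- column 0 of H is constant 1/s
  have hκs : (κ:ℝ) = s ^ 2 := hs2.symm
  have hH0 : ∀ i, H i 0 = 1 / s := by
    intro i
    rcases eq_or_ne i 0 with rfl | hi
    · simp only [hH_def, hv_def, if_pos rfl, if_true, hc_def, hκs]
      have h1 : s ^ 2 - s ≠ 0 := by nlinarith
      field_simp
      ring
    · simp only [hH_def, hv_def, if_neg hi, if_pos rfl, if_true, hc_def, hκs]
      have h1 : s ^ 2 - s ≠ 0 := by nlinarith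
      have h2 : -1 + s ≠ 0 := by intro h; linarith
      field_simp
      rw [div_self (show s - 1 ≠ 0 by intro h; linarith)]
      ring
  -- column sums of H
  have colsum : ∀ k, ∑ j, H j k = if k = 0 then s else 0 := by
    intro k
    have h1 : ∀ j : Fin κ, H j k = s * (H j 0 * H j k) := by
      intro j; rw [hH0 j]; field_simp
    rw [Finset.sum_congr rfl fun j _ => h1 j, ← Finset.mul_sum, key 0 k]
    by_cases hk : k = 0 <;> simp [hk, eq_comm]
  -- entries of H are bounded by 1 in square
  have hsq : ∀ a b, H a b ^ 2 ≤ 1 := by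
    intro a b
    have h1 : ∑ k, H k b * H k b = 1 := by rw [key b b]; simp
    have h2 : H a b ^ 2 ≤ ∑ k, H k b ^ 2 :=
      Finset.single_le_sum (f := fun k => H k b ^ 2) (fun k _ => sq_nonneg _)
        (Finset.mem_univ a)
    calc H a b ^ 2 ≤ ∑ k, H k b ^ 2 := h2
      _ = 1 := by rw [← h1]; exact Finset.sum_congr rfl fun k _ => pow_two _
  -- the diagonal entries
  set d : Fin κ → ℝ :=
    fun k => if k = 0 then 0 else -(κ:ℝ) + (k:ℝ) / (2 * (κ:ℝ)^2) with hd_def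
  have hκ0 : (κ:ℝ) ≠ 0 := by positivity
  have hdneg : ∀ k : Fin κ, k ≠ 0 → d k < 0 := by
    intro k hk
    simp only [hd_def, if_neg hk]
    have hkκ : ((k:ℕ):ℝ) < κ := by exact_mod_cast k.is_lt
    have hk0 : (0:ℝ) ≤ ((k:ℕ):ℝ) := by positivity
    have h1 : ((k:ℕ):ℝ) / (2 * (κ:ℝ)^2) < (κ:ℝ) := by
      rw [div_lt_iff₀ (by positivity)]; nlinarith
    linarith
  have hd0 : d 0 = 0 := by simp [hd_def]
  have hdinj : Function.Injective d := by
    intro k l h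
    rcases eq_or_ne k 0 with rfl | hk <;> rcases eq_or_ne l 0 with rfl | hl
    · rfl
    · exfalso
      have h1 := hdneg l hl
      rw [← h, hd0] at h1; exact lt_irrefl _ h1
    · exfalso
      have h1 := hdneg k hk
      rw [h, hd0] at h1; exact lt_irrefl _ h1
    · simp only [hd_def, if_neg hk, if_neg hl] at h
      have h' : ((k:ℕ):ℝ) / (2 * (κ:ℝ)^2) = ((l:ℕ):ℝ) / (2 * (κ:ℝ)^2) := by
        linarith
      have h2 : ((k:ℕ):ℝ) = ((l:ℕ):ℝ) := by
        have hD : (2 * (κ:ℝ)^2) ≠ 0 := by positivity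
        field_simp at h'
        exact_mod_cast h'
      have : (k:ℕ) = (l:ℕ) := by exact_mod_cast h2
      exact Fin.ext this
  -- Q and its entries
  set Q : Matrix (Fin κ) (Fin κ) ℝ := H * Matrix.diagonal d * Hᵀ with hQ_def
  have hQ : ∀ i j, Q i j = ∑ k, d k * (H i k * H j k) := by
    intro i j
    rw [hQ_def, Matrix.mul_apply]
    refine Finset.sum_congr rfl fun k _ => ?_
    rw [Matrix.mul_diagonal, Matrix.transpose_apply]
    ring
  refine ⟨Q, H, d, ?_, ?_, ?_, ?_, ?_, hdinj, rfl⟩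
  · -- symmetry
    ext i j
    rw [Matrix.transpose_apply, hQ, hQ]
    exact Finset.sum_congr rfl fun k _ => by ring
  · -- off-diagonal positivity
    intro i j hij
    rw [hQ i j]
    have hTsum : ∑ k, H i k * H j k = 0 := by
      rw [Finset.sum_congr rfl fun k _ => by rw [hsymm i k, hsymm j k], key i j,
        if_neg hij]
    have hT0 : H i 0 * H j 0 = 1 / (κ:ℝ) := by
      rw [hH0 i, hH0 j, hκs]; field_simp
    have hTbd : ∀ k, -1 ≤ H i k * H j k := by
      intro k
      nlinarith [hsq i k, hsq j k, sq_nonneg (H i k + H j k)]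
    rw [← Finset.sum_erase_add _ _ (Finset.mem_univ (0 : Fin κ))]
    have hd0 : d 0 = 0 := by simp [hd_def]
    have split : ∑ k ∈ Finset.univ.erase (0 : Fin κ), d k * (H i k * H j k)
        = -(κ:ℝ) * ∑ k ∈ Finset.univ.erase (0 : Fin κ), (H i k * H j k)
          + ∑ k ∈ Finset.univ.erase (0 : Fin κ),
              ((k:ℝ) / (2 * (κ:ℝ)^2)) * (H i k * H j k) := by
      rw [Finset.mul_sum, ← Finset.sum_add_distrib]
      refine Finset.sum_congr rfl fun k hk => ?_
      have hk0 : k ≠ 0 := (Finset.mem_erase.mp hk).1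
      simp only [hd_def, if_neg hk0]
      ring
    have herase : ∑ k ∈ Finset.univ.erase (0 : Fin κ), (H i k * H j k)
        = -(1 / (κ:ℝ)) := by
      have h5 : (∑ k ∈ Finset.univ.erase (0 : Fin κ), H i k * H j k)
          + H i 0 * H j 0 = 0 := by
        have h6 := Finset.sum_erase_add Finset.univ (fun k => H i k * H j k)
          (Finset.mem_univ (0 : Fin κ))
        simpa [hTsum] using h6
      rw [hT0] at h5
      linarith
    have hsecond : -(((κ:ℝ) - 1) / (2 * (κ:ℝ))) ≤
        ∑ k ∈ Finset.univ.erase (0 : Fin κ),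
          ((k:ℝ) / (2 * (κ:ℝ)^2)) * (H i k * H j k) := by
      have hbd : ∀ k ∈ Finset.univ.erase (0 : Fin κ),
          -((κ:ℝ) / (2 * (κ:ℝ)^2)) ≤ ((k:ℝ) / (2 * (κ:ℝ)^2)) * (H i k * H j k) := by
        intro k _
        have hkκ : ((k:ℕ):ℝ) < κ := by exact_mod_cast k.is_lt
        have hk0 : (0:ℝ) ≤ ((k:ℕ):ℝ) := by positivity
        have := hTbd k
        have h2κ : (0:ℝ) < 2 * (κ:ℝ)^2 := by positivity
        have hfrac0 : (0:ℝ) ≤ ((k:ℕ):ℝ) / (2 * (κ:ℝ)^2) := by positivity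
        have hfrac : ((k:ℕ):ℝ) / (2 * (κ:ℝ)^2) ≤ (κ:ℝ) / (2 * (κ:ℝ)^2) :=
          (div_le_div_iff_of_pos_right h2κ).mpr hkκ.le
        nlinarith [mul_nonneg hfrac0 (show (0:ℝ) ≤ H i k * H j k + 1 by linarith)]
      have hcard : (Finset.univ.erase (0 : Fin κ)).card = κ - 1 := by
        rw [Finset.card_erase_of_mem (Finset.mem_univ _), Finset.card_univ,
          Fintype.card_fin]
      calc -(((κ:ℝ) - 1) / (2 * (κ:ℝ)))
          = (κ - 1 : ℕ) • (-((κ:ℝ) / (2 * (κ:ℝ)^2))) := by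
            rw [nsmul_eq_mul]
            have : ((κ - 1 : ℕ):ℝ) = (κ:ℝ) - 1 := by
              rw [Nat.cast_sub (by omega)]; norm_num
            rw [this]
            field_simp
        _ = ∑ _k ∈ Finset.univ.erase (0 : Fin κ), (-((κ:ℝ) / (2 * (κ:ℝ)^2))) := by
            rw [Finset.sum_const, hcard]
        _ ≤ _ := Finset.sum_le_sum hbd
    rw [split, herase, hd0]
    have h1 : -(κ:ℝ) * -(1 / (κ:ℝ)) = 1 := by field_simp
    rw [h1]
    have hlt : ((κ:ℝ) - 1) / (2 * (κ:ℝ)) < 1 := by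
      rw [div_lt_one (by positivity)]
      linarith
    linarith
  · -- row sums
    intro i
    rw [Finset.sum_congr rfl fun j _ => hQ i j, Finset.sum_comm]
    apply Finset.sum_eq_zero
    intro k _
    have : ∑ j, d k * (H i k * H j k) = d k * H i k * ∑ j, H j k := by
      rw [Finset.mul_sum]
      exact Finset.sum_congr rfl fun j _ => by ring
    rw [this, colsum k]
    by_cases hk : k = 0
    · simp [hk, hd_def]
    · simp [hk]
  · -- orthogonality
    ext i j
    rw [Matrix.mul_apply]
    rw [Finset.sum_congr rfl fun k _ => by rw [Matrix.transpose_apply], key i j]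
    simp [Matrix.one_apply]
  · -- nonzero entries
    intro i j
    rcases eq_or_ne j 0 with rfl | hj
    · rw [hH0 i]; positivity
    rcases eq_or_ne i 0 with rfl | hi
    · rw [hsymm 0 j, hH0 j]; positivity
    rcases eq_or_ne i j with rfl | hij
    · simp only [hH_def, if_pos rfl, hv_def, if_neg hi]
      intro h
      apply hne1
      norm_num at h
      have : c = 1 := by linarith
      rw [hc_def] at this
      field_simp at this
      linarith
    · simp only [hH_def, if_neg hij, hv_def, if_neg hi, if_neg hj]
      intro h
      have : c = 0 := by nlinarith
      exact absurd this (ne_of_gt hc0)
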